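/- arXiv:1807.07945 — 2 statements merged into one kernel-verified Lean document; each statement's English description precedes it below -/
import Mathlib

section
/- Let k, λ, j be integers with 1 ≤ j < λ < k. If an infinite word avoids (k,λ)-anti-powers (i.e., no factor of it is a (k,λ)-anti-power), then it avoids (k-j, λ-j)-anti-powers. -/
/-- The `i`-th block of length `m` of a finite word `v`. -/
def listBlock {A : Type*} (v : List A) (m i : ℕ) : List A :=
  (v.drop (i * m)).take m

/-- `v` is a `(k,λ)`-anti-power: `v` consists of `k` blocks of equal positive length and
each block is equal to at most `λ` of the blocks. -/
def IsKLAntipower {A : Type*} (k lam : ℕ) (v : List A) : Prop :=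
  ∃ m : ℕ, 1 ≤ m ∧ v.length = k * m ∧
    ∀ j < k, Nat.card {i : ℕ // i < k ∧ listBlock v m i = listBlock v m j} ≤ lam

/-- The finite word `u` is a factor of the infinite word `x`. -/
def IsFactor {A : Type*} (x : ℕ → A) (u : List A) : Prop :=
  ∃ i, u = (List.range u.length).map fun j => x (i + j)

/-- The infinite word `x` avoids `(k,λ)`-anti-powers: no factor of `x` is a
`(k,λ)`-anti-power. -/
def AvoidsKLAntipowers {A : Type*} (x : ℕ → A) (k lam : ℕ) : Prop :=
  ∀ v : List A, IsFactor x v → ¬ IsKLAntipower k lam v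

lemma blockEq {A : Type*} (f : ℕ → A) (n m i : ℕ) (h : i * m + m ≤ n) :
    listBlock ((List.range n).map f) m i = (List.range m).map fun t => f (i * m + t) := by
  apply List.ext_getElem
  · simp [listBlock]; omega
  · intro t h1 h2
    simp [listBlock]

lemma natCard_subtype {p : ℕ → Prop} : Nat.card {i // p i} = {i | p i}.ncard :=
  Nat.card_coe_set_eq _

lemma ncard_lt_split (k j : ℕ) (hjk : j ≤ k) (p : ℕ → Prop) :
    {i | i < k ∧ p i}.ncard ≤ {i | i < k - j ∧ p i}.ncard + j := by
  have hfin : {i | i < k - j ∧ p i}.Finite :=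
    Set.Finite.subset (Set.finite_Iio (k - j)) (fun i hi => hi.1)
  have h2 : (Set.Ico (k - j) k).Finite := Set.finite_Ico _ _
  have hsub : {i | i < k ∧ p i} ⊆ {i | i < k - j ∧ p i} ∪ Set.Ico (k - j) k := by
    intro i hi
    rcases Nat.lt_or_ge i (k - j) with hik | hik
    · exact Or.inl ⟨hik, hi.2⟩
    · exact Or.inr ⟨hik, hi.1⟩
  calc {i | i < k ∧ p i}.ncard
      ≤ ({i | i < k - j ∧ p i} ∪ Set.Ico (k - j) k).ncard :=
        Set.ncard_le_ncard hsub (hfin.union h2)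
    _ ≤ {i | i < k - j ∧ p i}.ncard + (Set.Ico (k - j) k).ncard := Set.ncard_union_le _ _
    _ ≤ {i | i < k - j ∧ p i}.ncard + j := by
        have : (Set.Ico (k - j) k).ncard = k - (k - j) := by
          rw [← Finset.coe_Ico, Set.ncard_coe_finset, Nat.card_Ico]
        omega

lemma card_eq_block {A : Type*} (k' c : ℕ) (B : ℕ → List A)
    (hB : ∀ j0 < k', {i | i < k' ∧ B i = B j0}.ncard ≤ c) (b : List A) :
    {i | i < k' ∧ B i = b}.ncard ≤ c := by
  by_cases hne : ∃ i0, i0 < k' ∧ B i0 = b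
  · obtain ⟨i0, hi0, hB0⟩ := hne
    have he : {i | i < k' ∧ B i = b} = {i | i < k' ∧ B i = B i0} := by rw [hB0]
    rw [he]; exact hB i0 hi0
  · push_neg at hne
    have he : {i | i < k' ∧ B i = b} = ∅ := by
      ext i; simp only [Set.mem_setOf_eq, Set.mem_empty_iff_false, iff_false, not_and]
      exact hne i
    simp [he]


/-- For `1 ≤ j < λ < k`, an infinite word avoiding `(k,λ)`-anti-powers
also avoids `(k-j, λ-j)`-anti-powers. -/
theorem statement8 {A : Type*} (k lam j : ℕ) (hj : 1 ≤ j) (hjlam : j < lam) (hlamk : lam < k)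
    (x : ℕ → A) (h : AvoidsKLAntipowers x k lam) :
    AvoidsKLAntipowers x (k - j) (lam - j) := by
  intro v hvfac hvap
  obtain ⟨m, hm, hlen, hv⟩ := hvap
  obtain ⟨i0, hvi⟩ := hvfac
  rw [hlen] at hvi
  set f : ℕ → A := fun t => x (i0 + t) with hf
  set w : List A := (List.range (k * m)).map f with hw
  have hwlen : w.length = k * m := by simp [hw]
  apply h w ⟨i0, by rw [hwlen]⟩
  refine ⟨m, hm, hwlen, ?_⟩
  set B : ℕ → List A := fun i => (List.range m).map fun t => f (i * m + t) with hB
  have hBw : ∀ i < k, listBlock w m i = B i := by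
    intro i hi
    exact blockEq f (k * m) m i (by nlinarith)
  have hBv : ∀ i < k - j, listBlock v m i = B i := by
    intro i hi
    rw [hvi]
    exact blockEq f ((k - j) * m) m i (by nlinarith)
  have hv' : ∀ j0 < k - j, {i | i < k - j ∧ B i = B j0}.ncard ≤ lam - j := by
    intro j0 hj0
    have := hv j0 hj0
    rw [natCard_subtype] at this
    have he : {i | i < k - j ∧ listBlock v m i = listBlock v m j0}
        = {i | i < k - j ∧ B i = B j0} := by
      ext i
      simp only [Set.mem_setOf_eq]
      exact and_congr_right fun hi => by rw [hBv i hi, hBv j0 hj0]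
    rwa [he] at this
  intro j' hj'
  rw [natCard_subtype]
  have he : {i | i < k ∧ listBlock w m i = listBlock w m j'} = {i | i < k ∧ B i = B j'} := by
    ext i
    simp only [Set.mem_setOf_eq]
    exact and_congr_right fun hi => by rw [hBw i hi, hBw j' hj']
  rw [he]
  calc {i | i < k ∧ B i = B j'}.ncard
      ≤ {i | i < k - j ∧ B i = B j'}.ncard + j :=
        ncard_lt_split k j (by omega) _
    _ ≤ (lam - j) + j := by
        have := card_eq_block (k - j) (lam - j) B hv' (B j')
        omega
    _ = lam := by omega
end

section
/- Let k ≥ 4 be an integer and let (γ_i)_{i≥1} be a strictly increasing sequence of positive integers satisfying γ_{i+1} ≥ (k+1)·γ_i for all i ≥ 1. Define the infinite binary word x by x[j] = 1 if j = γ_i for some i and x[j] = 0 otherwise. Then x is aperiodic and avoids (k, k-3)-anti-powers. In particular, for every k ≥ 4 there exists an infinite aperiodic word avoiding (k, k-3)-anti-powers. -/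
/-- The infinite word `x` is eventually periodic: some suffix of `x` equals `u^ω` for a
nonempty finite word `u`; equivalently, `x` is eventually periodic with some period `p > 0`. -/
def EventuallyPeriodic {A : Type*} (x : ℕ → A) : Prop :=
  ∃ j p : ℕ, 0 < p ∧ ∀ n, j ≤ n → x (n + p) = x n

lemma block_formula (x : ℕ → ℕ) (k m t i0 : ℕ) (ht : t < k) :
    listBlock ((List.range (k*m)).map fun j => x (i0 + j)) m t
      = (List.range m).map fun r => x (i0 + (t*m + r)) := by
  have hle : (t+1)*m ≤ k*m := Nat.mul_le_mul_right m ht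
  have h2 : (t+1)*m = t*m + m := by ring
  have h1 : k*m = t*m + (m + (k*m - (t*m+m))) := by omega
  unfold listBlock
  rw [← List.map_drop, ← List.map_take, h1, List.range_add,
    List.drop_left' (by simp), ← List.map_take, List.take_range,
    Nat.min_eq_left (Nat.le_add_right _ _), List.map_map]
  rfl

open Classical in
/-- Let `k ≥ 4` and let `(γ_i)` be a strictly increasing sequence of
positive integers with `γ_{i+1} ≥ (k+1)·γ_i`.  The binary word `x` with `x[j] = 1` exactly
when `j` is one of the `γ_i` is aperiodic and avoids `(k, k-3)`-anti-powers.  In particular,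
for every `k ≥ 4` there is an aperiodic infinite word avoiding `(k, k-3)`-anti-powers. -/
theorem statement11 (k : ℕ) (hk : 4 ≤ k) (γ : ℕ → ℕ) (hpos : ∀ i, 0 < γ i)
    (hmono : StrictMono γ) (hgrow : ∀ i, (k + 1) * γ i ≤ γ (i + 1))
    (x : ℕ → ℕ) (hx : x = fun j => if ∃ i, γ i = j then 1 else 0) :
    (¬ EventuallyPeriodic x ∧ AvoidsKLAntipowers x k (k - 3)) ∧
    ∃ y : ℕ → ℕ, ¬ EventuallyPeriodic y ∧ AvoidsKLAntipowers y k (k - 3) := by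
  classical
  have hx1 : ∀ n, (∃ i, γ i = n) → x n = 1 := by
    intro n hn; rw [hx]; exact if_pos hn
  have hx0 : ∀ n, x n ≠ 0 → ∃ i, γ i = n := by
    intro n hn; by_contra hc; exact hn (by rw [hx]; exact if_neg hc)
  -- Aperiodicity
  have haper : ¬ EventuallyPeriodic x := by
    rintro ⟨j, p, hp, hper⟩
    set m := max j p with hm
    have hγm : m ≤ γ m := hmono.le_apply
    have h1 : x (γ m + p) = 1 := by
      rw [hper (γ m) (le_trans (le_max_left _ _) hγm)]
      exact hx1 _ ⟨m, rfl⟩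
    obtain ⟨i, hi⟩ := hx0 _ (by rw [h1]; exact one_ne_zero)
    have him : m < i := hmono.lt_iff_lt.mp (by omega)
    have h3 : γ (m+1) ≤ γ i := hmono.monotone (by omega)
    have hg := hgrow m
    have h4 : 4 * γ m ≤ k * γ m := Nat.mul_le_mul_right (γ m) hk
    have h5 : (k+1) * γ m = k * γ m + γ m := by ring
    have h6 : p ≤ γ m := le_trans (le_max_right j p) hγm
    omega
  -- Avoidance
  have havoid : AvoidsKLAntipowers x k (k - 3) := by
    rintro v ⟨i0, hv⟩ ⟨m, hm, hlen, hcount⟩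
    rw [hlen] at hv
    subst hv
    set P : ℕ → Prop := fun t => ∀ r < m, x (i0 + (t*m + r)) = 0 with hP
    set NZ := (Finset.range k).filter (fun t => ¬ P t) with hNZ
    -- every non-zero block contains a `γ`
    have hwit : ∀ t ∈ NZ, ∃ i, i0 + t*m ≤ γ i ∧ γ i < i0 + t*m + m := by
      intro t ht
      rw [hNZ, Finset.mem_filter] at ht
      obtain ⟨ht1, ht2⟩ := ht
      rw [hP] at ht2
      have : ∃ r, r < m ∧ x (i0 + (t*m + r)) ≠ 0 := by
        by_contra hc
        push_neg at hc
        exact ht2 (fun r hr => hc r hr)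
      obtain ⟨r, hr, hxr⟩ := this
      obtain ⟨i, hi⟩ := hx0 _ hxr
      exact ⟨i, by omega⟩
    -- at most one index has `γ` in `[i0+m, i0+k*m)`
    have huniq : ∀ i i', i0 + m ≤ γ i → γ i < i0 + k*m → i0 + m ≤ γ i' →
        γ i' < i0 + k*m → i = i' := by
      have key : ∀ i i', i < i' → i0 + m ≤ γ i → γ i' < i0 + k*m → False := by
        intro i i' hlt hi1 hi2
        have h3 : γ (i+1) ≤ γ i' := hmono.monotone (by omega)
        have hg := hgrow i
        have h4 : (k+1) * (i0 + m) ≤ (k+1) * γ i := Nat.mul_le_mul_left _ hi1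
        have h5 : (k+1) * (i0 + m) = k*i0 + i0 + k*m + m := by ring
        omega
      intro i i' hi1 hi2 hi1' hi2'
      rcases lt_trichotomy i i' with h | h | h
      · exact absurd (key i i' h hi1 hi2') (fun a => a)
      · exact h
      · exact absurd (key i' i h hi1' hi2) (fun a => a)
    -- nonzero blocks with positive index coincide
    have hkey : ∀ t ∈ NZ, ∀ t' ∈ NZ, t ≠ 0 → t' ≠ 0 → t = t' := by
      intro t ht t' ht' h0 h0'
      have htk : t < k := Finset.mem_range.mp (Finset.mem_filter.mp ht).1
      have htk' : t' < k := Finset.mem_range.mp (Finset.mem_filter.mp ht').1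
      obtain ⟨i, hi1, hi2⟩ := hwit t ht
      obtain ⟨i', hi1', hi2'⟩ := hwit t' ht'
      have hmt : m ≤ t*m := Nat.le_mul_of_pos_left m (Nat.pos_of_ne_zero h0)
      have hmt' : m ≤ t'*m := Nat.le_mul_of_pos_left m (Nat.pos_of_ne_zero h0')
      have hbt : (t+1)*m ≤ k*m := Nat.mul_le_mul_right m htk
      have hbt' : (t'+1)*m ≤ k*m := Nat.mul_le_mul_right m htk'
      have e1 : (t+1)*m = t*m + m := by ring
      have e1' : (t'+1)*m = t'*m + m := by ring
      have : i = i' := huniq i i' (by omega) (by omega) (by omega) (by omega)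
      subst this
      have l1 : t*m < (t'+1)*m := by omega
      have l2 : t'*m < (t+1)*m := by omega
      have := Nat.lt_of_mul_lt_mul_right l1
      have := Nat.lt_of_mul_lt_mul_right l2
      omega
    have hNZcard : NZ.card ≤ 2 := by
      by_cases he : ∀ t ∈ NZ, t = 0
      · have hsub : NZ ⊆ {0} := fun t ht => Finset.mem_singleton.mpr (he t ht)
        calc NZ.card ≤ ({0} : Finset ℕ).card := Finset.card_le_card hsub
          _ ≤ 2 := by simp
      · push_neg at he
        obtain ⟨t₁, ht₁, h0₁⟩ := he
        have hsub : NZ ⊆ {0, t₁} := by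
          intro t ht
          by_cases h : t = 0
          · simp [h]
          · simp [hkey t ht t₁ ht₁ h h0₁]
        calc NZ.card ≤ ({0, t₁} : Finset ℕ).card := Finset.card_le_card hsub
          _ ≤ 2 := Finset.card_le_two
    have hsum : ((Finset.range k).filter P).card + NZ.card = k := by
      rw [hNZ]
      simpa using Finset.card_filter_add_card_filter_not (s := Finset.range k) P
    have hZFcard : k - 2 ≤ ((Finset.range k).filter P).card := by omega
    obtain ⟨j, hjmem⟩ := Finset.card_pos.mp (by omega : 0 < ((Finset.range k).filter P).card)
    have hjk : j < k := Finset.mem_range.mp (Finset.mem_filter.mp hjmem).1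
    have hjP : P j := (Finset.mem_filter.mp hjmem).2
    have hzero : ∀ t, t < k → P t →
        listBlock ((List.range (k*m)).map fun j => x (i0 + j)) m t = List.replicate m 0 := by
      intro t htk hPt
      rw [block_formula x k m t i0 htk]
      refine List.eq_replicate_iff.mpr ⟨by simp, ?_⟩
      intro b hb
      simp only [List.mem_map, List.mem_range] at hb
      obtain ⟨r, hr, hrb⟩ := hb
      rw [← hrb]
      exact hPt r hr
    set Q : ℕ → Prop := fun i => i < k ∧
        listBlock ((List.range (k*m)).map fun j => x (i0 + j)) m i
          = listBlock ((List.range (k*m)).map fun j => x (i0 + j)) m j with hQ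
    have hsub : (↑((Finset.range k).filter P) : Set ℕ) ⊆ {i | Q i} := by
      intro t ht
      rw [Finset.mem_coe, Finset.mem_filter, Finset.mem_range] at ht
      exact ⟨ht.1, (hzero t ht.1 ht.2).trans (hzero j hjk hjP).symm⟩
    have hfin : {i | Q i}.Finite := (Set.finite_lt_nat k).subset (fun i hi => hi.1)
    have hcard : ((Finset.range k).filter P).card ≤ Nat.card {i : ℕ // Q i} :=
      calc ((Finset.range k).filter P).card
          = (↑((Finset.range k).filter P) : Set ℕ).ncard := (Set.ncard_coe_finset _).symm
        _ ≤ ({i | Q i}).ncard := Set.ncard_le_ncard hsub hfin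
        _ = Nat.card {i : ℕ // Q i} := (Nat.card_coe_set_eq _).symm
    have hle := hcount j hjk
    have : Nat.card {i : ℕ // Q i} ≤ k - 3 := hle
    omega
  exact ⟨⟨haper, havoid⟩, x, haper, havoid⟩
end
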